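/- Let g_n, n = n̲,…,n̄, be continuous bid densities on their supports with g_n(v̲) > 0 for each n, p_n > 0 with Σ p_n = 1, and G(b) = Σ_n p_n (∫_{v̲}^b g_n)^n. Then lim_{t↓0} log G(v̲ + t)/log t = n̲. -/

import Mathlib

open intervalIntegral

theorem stmt8 (nlo nhi : ℕ) (hlo : 2 ≤ nlo) (hle : nlo ≤ nhi)
    (p : ℕ → ℝ) (hp : ∀ n ∈ Finset.Icc nlo nhi, 0 < p n)
    (hsum : ∑ n ∈ Finset.Icc nlo nhi, p n = 1)
    (vlo : ℝ) (gd : ℕ → ℝ → ℝ) (G : ℝ → ℝ)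
    (hcont : ∀ n ∈ Finset.Icc nlo nhi, Continuous (gd n))
    (hnonneg : ∀ n ∈ Finset.Icc nlo nhi, ∀ b, 0 ≤ gd n b)
    (hpos : ∀ n ∈ Finset.Icc nlo nhi, 0 < gd n vlo)
    (hG : ∀ b, G b = ∑ n ∈ Finset.Icc nlo nhi, p n * (∫ t in vlo..b, gd n t) ^ n) :
    Filter.Tendsto (fun t => Real.log (G (vlo + t)) / Real.log t)
      (nhdsWithin 0 (Set.Ioi 0)) (nhds (nlo : ℝ)) := by
  set S := Finset.Icc nlo nhi with hS
  have hmem : nlo ∈ S := Finset.mem_Icc.2 ⟨le_refl _, hle⟩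
  set I : ℕ → ℝ → ℝ := fun n t => ∫ s in vlo..(vlo + t), gd n s with hI
  -- slope tendsto
  have hslope : ∀ n ∈ S, Filter.Tendsto (fun t => I n t / t)
      (nhdsWithin 0 (Set.Ioi 0)) (nhds (gd n vlo)) := by
    intro n hn
    have h1 : HasDerivAt (fun b => ∫ s in vlo..b, gd n s) (gd n vlo) vlo :=
      intervalIntegral.integral_hasDerivAt_right
        ((hcont n hn).intervalIntegrable _ _)
        ((hcont n hn).stronglyMeasurableAtFilter _ _) (hcont n hn).continuousAt
    have h2 : HasDerivAt (fun t => I n t) (gd n vlo) 0 := by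
      have h3 : HasDerivAt (fun t : ℝ => vlo + t) 1 0 := (hasDerivAt_id 0).const_add vlo
      have h1' : HasDerivAt (fun b => ∫ s in vlo..b, gd n s) (gd n vlo) ((fun t : ℝ => vlo + t) 0) := by
        simpa using h1
      simpa [hI, Function.comp_def] using h1'.comp 0 h3
    have h4 := hasDerivAt_iff_tendsto_slope.1 h2
    have h5 : Filter.Tendsto (slope (fun t => I n t) 0)
        (nhdsWithin 0 (Set.Ioi 0)) (nhds (gd n vlo)) :=
      h4.mono_left (nhdsWithin_mono _ fun x hx => ne_of_gt hx)
    refine h5.congr fun t => ?_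
    simp [slope, hI, inv_mul_eq_div]
  have hIzero : ∀ n ∈ S, Filter.Tendsto (fun t => I n t)
      (nhdsWithin 0 (Set.Ioi 0)) (nhds 0) := by
    intro n hn
    have := (hslope n hn).mul (tendsto_nhdsWithin_of_tendsto_nhds (f := fun t : ℝ => t)
      Filter.tendsto_id)
    rw [mul_zero] at this
    refine this.congr' ?_
    filter_upwards [self_mem_nhdsWithin] with t ht
    field_simp [ne_of_gt (Set.mem_Ioi.1 ht)]
  set c : ℝ := p nlo * (gd nlo vlo) ^ nlo with hc
  have hcpos : 0 < c := mul_pos (hp nlo hmem) (pow_pos (hpos nlo hmem) nlo)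
  -- ratio tendsto
  have hratio : Filter.Tendsto (fun t => G (vlo + t) / t ^ nlo)
      (nhdsWithin 0 (Set.Ioi 0)) (nhds c) := by
    have hterm : ∀ n ∈ S, Filter.Tendsto
        (fun t => p n * (I n t / t) ^ nlo * (I n t) ^ (n - nlo))
        (nhdsWithin 0 (Set.Ioi 0))
        (nhds (p n * (gd n vlo) ^ nlo * (0 : ℝ) ^ (n - nlo))) := by
      intro n hn
      exact (tendsto_const_nhds.mul ((hslope n hn).pow nlo)).mul ((hIzero n hn).pow (n - nlo))
    have hsum' := tendsto_finset_sum S hterm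
    have hval : ∑ n ∈ S, p n * (gd n vlo) ^ nlo * (0 : ℝ) ^ (n - nlo) = c := by
      rw [Finset.sum_eq_single nlo]
      · simp [hc]
      · intro n hn hne
        have h1 : nlo ≤ n := (Finset.mem_Icc.1 hn).1
        have h2 : 0 < n - nlo := Nat.sub_pos_of_lt (lt_of_le_of_ne h1 (Ne.symm hne))
        simp [zero_pow h2.ne']
      · intro h; exact absurd hmem h
    rw [hval] at hsum'
    refine hsum'.congr' ?_
    filter_upwards [self_mem_nhdsWithin] with t ht
    have ht0 : (t : ℝ) ≠ 0 := ne_of_gt (Set.mem_Ioi.1 ht)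
    rw [hG, Finset.sum_div]
    refine Finset.sum_congr rfl fun n hn => ?_
    have h1 : nlo ≤ n := (Finset.mem_Icc.1 hn).1
    have : (I n t) ^ n = (I n t) ^ nlo * (I n t) ^ (n - nlo) := by
      rw [← pow_add, Nat.add_sub_cancel' h1]
    rw [this]
    field_simp [div_pow]
    rw [div_pow, show p n * (I n t ^ nlo / t ^ nlo) * I n t ^ (n - nlo) * t ^ nlo = p n * I n t ^ (n - nlo) * I n t ^ nlo * (t ^ nlo / t ^ nlo) by ring, div_self (pow_ne_zero _ ht0), mul_one]
  -- eventually positivity and reformulation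
  have hev : ∀ᶠ t in nhdsWithin 0 (Set.Ioi 0),
      Real.log (G (vlo + t)) / Real.log t
        = Real.log (G (vlo + t) / t ^ nlo) / Real.log t + nlo := by
    have h1 : ∀ᶠ t in nhdsWithin 0 (Set.Ioi 0), 0 < G (vlo + t) / t ^ nlo :=
      hratio.eventually (eventually_gt_nhds hcpos)
    have h2 : Set.Ioo (0 : ℝ) 1 ∈ nhdsWithin 0 (Set.Ioi 0) :=
      Ioo_mem_nhdsGT_of_mem ⟨le_refl 0, zero_lt_one⟩
    filter_upwards [h1, h2] with t hrt ht
    have ht0 : 0 < t := ht.1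
    have hlt : Real.log t ≠ 0 := ne_of_lt (Real.log_neg ht0 ht.2)
    have htp : (0 : ℝ) < t ^ nlo := pow_pos ht0 nlo
    have hGt : G (vlo + t) = (G (vlo + t) / t ^ nlo) * t ^ nlo := by
      field_simp
    rw [hGt, Real.log_mul (ne_of_gt hrt) (ne_of_gt htp), Real.log_pow]
    field_simp
  -- final limit
  have hlog : Filter.Tendsto (fun t => Real.log (G (vlo + t) / t ^ nlo))
      (nhdsWithin 0 (Set.Ioi 0)) (nhds (Real.log c)) :=
    ((Real.continuousAt_log hcpos.ne').tendsto).comp hratio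
  have hlt : Filter.Tendsto (fun t => Real.log t) (nhdsWithin 0 (Set.Ioi 0)) Filter.atBot :=
    Real.tendsto_log_nhdsGT_zero
  have hdiv : Filter.Tendsto (fun t => Real.log (G (vlo + t) / t ^ nlo) / Real.log t)
      (nhdsWithin 0 (Set.Ioi 0)) (nhds 0) := by
    have h1 : Filter.Tendsto (fun t => Real.log (G (vlo + t) / t ^ nlo) / (-Real.log t))
        (nhdsWithin 0 (Set.Ioi 0)) (nhds 0) :=
      hlog.div_atTop (Filter.tendsto_neg_atBot_atTop.comp hlt)
    have := h1.neg
    rw [neg_zero] at this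
    refine this.congr fun t => ?_
    rw [div_neg, neg_neg]
  have := hdiv.add (tendsto_const_nhds (x := (nlo : ℝ)))
  rw [zero_add] at this
  exact this.congr' (by filter_upwards [hev] with t ht using ht.symm)
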